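/- Let G be a countable discrete abelian group, let Y = (Y, ν, (S_g)_{g∈G}) be a G-system, let U be a compact metrizable abelian group with Haar probability measure, and let ρ : G × Y → U be a cocycle which is a phase polynomial of degree < k (derivatives taken in the group U). Form the skew product X = Y × U with measure ν × Haar and action T_g(y, u) = (S_g y, ρ(g, y)·u), and assume X is ergodic. Let m ≥ 0 and let f : G × X → S¹ be a function of the form f(g, x) = p(g, x) · F(T_g x) · conj(F(x)), where p : G × X → S¹ is a phase polynomial of degree < m and F : X → S¹ is measurable, and suppose f is invariant under the vertical rotations V_u(y, t) = (y, u·t) for every u ∈ U, i.e. f(g, V_u x) = f(g, x) a.e. for all g, u. Then there exist a constant C depending only on k and m, a phase polynomial p' : G × X → S¹ of degree < C, and a measurable F' : X → S¹, such that p' and F' are both invariant under all the vertical rotations V_u and f(g, x) = p'(g, x) · F'(T_g x) · conj(F'(x)) for all g ∈ G and a.e. x ∈ X. -/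

import Mathlib

open MeasureTheory
open scoped symmDiff

set_option linter.unusedSectionVars false
set_option linter.unusedVariables false
set_option maxHeartbeats 1000000

noncomputable instance : MeasurableSpace Circle := borel Circle
instance : BorelSpace Circle := ⟨rfl⟩

/-- `φ : X → H` is a phase polynomial of degree `< k` with respect to the action `T` of `G`
on the measure space `(X, μ)`: all `k`-fold multiplicative derivatives
`Δ_{h₁} ⋯ Δ_{h_k} φ` equal `1` almost everywhere, where `Δ_g φ = (φ ∘ T_g) · φ⁻¹`. -/
def PhasePoly {G X H : Type*} [MeasurableSpace X] [CommGroup H]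
    (T : G → X → X) (μ : Measure X) : ℕ → (X → H) → Prop
  | 0, φ => ∀ᵐ x ∂μ, φ x = 1
  | (k + 1), φ => ∀ g : G, PhasePoly T μ k (fun x => φ (T g x) * (φ x)⁻¹)

/-- The action `T` of `G` on `(X, μ)` is ergodic: every measurable set that is invariant
modulo null sets under every `T g` has measure `0` or `1`. -/
def IsErgodicAction {G X : Type*} [MeasurableSpace X] (T : G → X → X)
    (μ : Measure X) : Prop :=
  ∀ A : Set X, MeasurableSet A → (∀ g : G, μ ((T g ⁻¹' A) ∆ A) = 0) → μ A = 0 ∨ μ A = 1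

/-! ### Degree bookkeeping functions -/

/-- Degree bound for the twisted vertical derivative of a polynomial. -/
def NmasterF : ℕ → ℕ → ℕ → ℕ
  | 0, _, _ => 0
  | 1, _, _ => 0
  | _+2, 0, _ => 0
  | _+2, 1, d => d
  | _+2, _+2, 0 => 0
  | v+2, j+2, d+1 =>
      max (NmasterF (v+1) (j+2) (NmasterF (v+2) (j+1) (d+1)))
        (max (NmasterF (v+2) (j+1) (d+1)) (NmasterF (v+2) (j+2) d)) + 1
termination_by v j d => (v, j, d)

/-- Degree bound for the twisted vertical derivative of a "good" function. -/
def NmasterG (mh v : ℕ) : ℕ → ℕ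
  | 0 => 0
  | 1 => max mh 1
  | j+2 =>
      max (NmasterF v (j+2) (NmasterG mh v (j+1)))
        (max (NmasterG mh v (j+1)) (NmasterF mh (j+2) mh)) + 1

/-- Degree bound for sections of polynomials. -/
def NsecF (k : ℕ) : ℕ → ℕ → ℕ
  | 0, d => d
  | 1, d => d
  | _+2, 0 => 0
  | v+2, d+1 => max (NsecF k (v+2) d) (NsecF k (v+1) (NmasterF (v+2) k (d+1))) + 1
termination_by v d => (v, d)

/-! ### Generic phase-polynomial infrastructure -/

section Generic

variable {G : Type} [AddCommGroup G] [Countable G]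
variable {α : Type*} [MeasurableSpace α] {μ : Measure α}
variable {H : Type*} [CommGroup H]

theorem qmp_ae' {β : Type*} [MeasurableSpace β] {ν' : Measure β} {f : α → β}
    (hf : Measure.QuasiMeasurePreserving f μ ν') {p : β → Prop}
    (h : ∀ᵐ y ∂ν', p y) : ∀ᵐ x ∂μ, p (f x) := by
  rw [ae_iff] at h ⊢
  exact measure_mono_null (fun x hx => hx) (hf.preimage_null h)

theorem PhasePoly.congr {T : G → α → α} (hT : ∀ g : G, Measure.QuasiMeasurePreserving (T g) μ μ)
    {d : ℕ} {q q' : α → H} (hqq : ∀ᵐ x ∂μ, q x = q' x) (h : PhasePoly T μ d q) :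
    PhasePoly T μ d q' := by
  induction d generalizing q q' with
  | zero =>
    simp only [PhasePoly] at h ⊢
    filter_upwards [h, hqq] with x h1 h2
    rw [← h2, h1]
  | succ d ih =>
    intro g
    refine ih ?_ (h g)
    filter_upwards [hqq, qmp_ae' (hT g) hqq] with x h1 h2
    rw [h1, h2]

theorem PhasePoly.mul {T : G → α → α}
    {d : ℕ} {q q' : α → H} (h : PhasePoly T μ d q) (h' : PhasePoly T μ d q') :
    PhasePoly T μ d (fun x => q x * q' x) := by
  induction d generalizing q q' with
  | zero =>
    filter_upwards [h, h'] with x h1 h2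
    simp [h1, h2]
  | succ d ih =>
    intro g
    have := ih (h g) (h' g)
    have heq : (fun x => (fun y => q y * q' y) (T g x) * ((fun y => q y * q' y) x)⁻¹)
        = (fun x => (q (T g x) * (q x)⁻¹) * (q' (T g x) * (q' x)⁻¹)) := by
      funext x
      simp [mul_comm, mul_assoc, mul_left_comm]
    rw [heq]
    exact this

theorem PhasePoly.inv {T : G → α → α}
    {d : ℕ} {q : α → H} (h : PhasePoly T μ d q) :
    PhasePoly T μ d (fun x => (q x)⁻¹) := by
  induction d generalizing q with
  | zero =>
    filter_upwards [h] with x h1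
    simp [h1]
  | succ d ih =>
    intro g
    have := ih (h g)
    have heq : (fun x => ((fun y => (q y)⁻¹) (T g x)) * (((fun y => (q y)⁻¹) x))⁻¹)
        = fun x => ((q (T g x) * (q x)⁻¹))⁻¹ := by
      funext x; simp [mul_comm]
    rw [heq]
    exact this

theorem PhasePoly.succ_of {T : G → α → α}
    (hT : ∀ g : G, Measure.QuasiMeasurePreserving (T g) μ μ)
    {d : ℕ} {q : α → H} (h : PhasePoly T μ d q) :
    PhasePoly T μ (d + 1) q := by
  induction d generalizing q with
  | zero =>
    intro g
    filter_upwards [h, qmp_ae' (hT g) h] with x h1 h2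
    simp [h1, h2]
  | succ d ih => exact fun g => ih (h g)

theorem PhasePoly.mono {T : G → α → α} (hT : ∀ g : G, Measure.QuasiMeasurePreserving (T g) μ μ)
    {d d' : ℕ} (hdd : d ≤ d') {q : α → H} (h : PhasePoly T μ d q) :
    PhasePoly T μ d' q := by
  induction hdd with
  | refl => exact h
  | step _ ih => exact ih.succ_of hT

theorem PhasePoly.comp_commuting {T : G → α → α}
    (hT : ∀ g : G, Measure.QuasiMeasurePreserving (T g) μ μ)
    {W : α → α} (hW : Measure.QuasiMeasurePreserving W μ μ)
    (hcomm : ∀ g : G, ∀ᵐ x ∂μ, W (T g x) = T g (W x))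
    {d : ℕ} {q : α → H} (h : PhasePoly T μ d q) :
    PhasePoly T μ d (fun x => q (W x)) := by
  induction d generalizing q with
  | zero => exact qmp_ae' hW h
  | succ d ih =>
    intro g
    refine PhasePoly.congr hT ?_ (ih (h g))
    filter_upwards [hcomm g] with x hx
    show q (T g (W x)) * (q (W x))⁻¹ = q (W (T g x)) * (q (W x))⁻¹
    rw [hx]

theorem ergodic_ae_const {Z : Type*} [TopologicalSpace Z]
    [TopologicalSpace.MetrizableSpace Z] [SecondCountableTopology Z]
    [MeasurableSpace Z] [BorelSpace Z]
    {T : G → α → α} [IsProbabilityMeasure μ] (herg : IsErgodicAction T μ)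
    {φ : α → Z} (hφ : Measurable φ) (hinv : ∀ g : G, ∀ᵐ x ∂μ, φ (T g x) = φ x) :
    ∃ z : Z, ∀ᵐ x ∂μ, φ x = z := by
  letI : MetricSpace Z := TopologicalSpace.metrizableSpaceMetric Z
  have key : ∀ B : Set Z, MeasurableSet B → μ (φ ⁻¹' B) = 0 ∨ μ (φ ⁻¹' B) = 1 := by
    intro B hB
    refine herg _ (hφ hB) fun g => ?_
    refine measure_mono_null ?_ (ae_iff.1 (hinv g))
    intro x hx
    simp only [Set.mem_symmDiff, Set.mem_preimage] at hx
    simp only [Set.mem_setOf_eq]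
    intro hc
    rw [hc] at hx
    tauto
  obtain ⟨s, hsc, hsd⟩ := TopologicalSpace.exists_countable_dense Z
  have hcover : ∀ n : ℕ, ∃ z ∈ s, μ (φ ⁻¹' Metric.ball z (1/(n+1))) = 1 := by
    intro n
    by_contra hc
    push_neg at hc
    have hz : ∀ z ∈ s, μ (φ ⁻¹' Metric.ball z (1/(n+1))) = 0 := by
      intro z hzs
      rcases key _ measurableSet_ball with h0 | h1
      · exact h0
      · exact absurd h1 (hc z hzs)
    have hun : μ (⋃ z ∈ s, φ ⁻¹' Metric.ball z (1/(n+1))) = 0 :=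
      (measure_biUnion_null_iff hsc).2 hz
    have huniv : (⋃ z ∈ s, φ ⁻¹' Metric.ball z (1/(n+1))) = Set.univ := by
      ext x
      simp only [Set.mem_iUnion, Set.mem_preimage, Set.mem_univ, iff_true]
      obtain ⟨z, hz1, hz2⟩ := hsd.exists_dist_lt (φ x) (by positivity : (0:ℝ) < 1/(n+1))
      exact ⟨z, hz1, by simpa [Metric.mem_ball, dist_comm] using hz2⟩
    rw [huniv] at hun
    simp at hun
  choose zs hzs hzs1 using hcover
  have hae : ∀ᵐ x ∂μ, ∀ n : ℕ, φ x ∈ Metric.closedBall (zs n) (1/(n+1)) := by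
    rw [ae_all_iff]
    intro n
    have h1 : μ (φ ⁻¹' Metric.closedBall (zs n) (1/(n+1))) = 1 := by
      refine le_antisymm prob_le_one ?_
      rw [← hzs1 n]
      exact measure_mono (Set.preimage_mono Metric.ball_subset_closedBall)
    have hco : μ ((φ ⁻¹' Metric.closedBall (zs n) (1/(n+1)))ᶜ) = 0 := by
      rw [measure_compl (hφ measurableSet_closedBall) (measure_ne_top _ _), h1]
      simp
    filter_upwards [measure_eq_zero_iff_ae_notMem.1 hco] with x hx
    simpa using hx
  obtain ⟨x₀, hx₀⟩ := hae.exists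
  refine ⟨φ x₀, ?_⟩
  filter_upwards [hae] with x hx
  have hd : ∀ n : ℕ, dist (φ x) (φ x₀) ≤ 2/(n+1) := by
    intro n
    calc dist (φ x) (φ x₀) ≤ dist (φ x) (zs n) + dist (zs n) (φ x₀) := dist_triangle _ _ _
    _ ≤ 1/(n+1) + 1/(n+1) := by
        have h1 := hx n
        have h2 := hx₀ n
        rw [Metric.mem_closedBall] at h1 h2
        have h3 : dist (zs n) (φ x₀) = dist (φ x₀) (zs n) := dist_comm _ _
        linarith
    _ = 2/(n+1) := by ring
  have hle : dist (φ x) (φ x₀) ≤ 0 := by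
    by_contra hlt
    push_neg at hlt
    obtain ⟨n, hn⟩ := exists_nat_gt (2 / dist (φ x) (φ x₀))
    have hn1 : 2 / dist (φ x) (φ x₀) < n + 1 := by linarith
    have h2 : 2/((n:ℝ)+1) < dist (φ x) (φ x₀) := by
      rw [div_lt_iff₀ (by positivity)] at hn1 ⊢
      · nlinarith
    linarith [hd n]
  exact dist_le_zero.1 hle

end Generic

/-! ### The skew product and vertical derivatives -/

section Skew

variable {G : Type} [AddCommGroup G] [Countable G]
variable {Y : Type} [MeasurableSpace Y] {ν : Measure Y} [IsProbabilityMeasure ν]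
variable {U : Type} [CommGroup U] [TopologicalSpace U] [IsTopologicalGroup U]
  [CompactSpace U] [TopologicalSpace.MetrizableSpace U] [MeasurableSpace U] [BorelSpace U]
variable {mU : Measure U} [mU.IsHaarMeasure] [IsProbabilityMeasure mU]
variable {S : G → Y → Y} {ρ : G → Y → U}

/-- the skew product transformation -/
def skw (S : G → Y → Y) (ρ : G → Y → U) (g : G) (x : Y × U) : Y × U :=
  (S g x.1, ρ g x.1 * x.2)

/-- vertical derivative -/
noncomputable def Dv {Y U : Type} [CommGroup U] (u : U) (q : Y × U → Circle) : Y × U → Circle :=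
  fun x => q (x.1, u * x.2) * (q x)⁻¹

/-- twisted vertical derivative -/
noncomputable def Mtw {Y U : Type} [CommGroup U] (σ : Y → U) (q : Y × U → Circle) : Y × U → Circle :=
  fun x => q (x.1, σ x.1 * x.2) * (q x)⁻¹

/-- vertical polynomiality (vertical degree) -/
def VPoly {Y U : Type} [MeasurableSpace Y] [MeasurableSpace U] [CommGroup U]
    (ν : Measure Y) (mU : Measure U) : ℕ → (Y × U → Circle) → Prop
  | 0, q => ∀ᵐ x ∂(ν.prod mU), q x = 1
  | (v+1), q => ∀ u : U, VPoly ν mU v (Dv u q)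

theorem skw_measurable (hS : ∀ g, MeasurePreserving (S g) ν ν) (hρm : ∀ g, Measurable (ρ g))
    (g : G) : Measurable (skw S ρ g) :=
  (((hS g).measurable).comp measurable_fst).prodMk
    (((hρm g).comp measurable_fst).mul measurable_snd)

theorem skw_mp (hS : ∀ g, MeasurePreserving (S g) ν ν) (hρm : ∀ g, Measurable (ρ g)) (g : G) :
    MeasurePreserving (skw S ρ g) (ν.prod mU) (ν.prod mU) := by
  have hgm : Measurable (Function.uncurry fun (y : Y) (c : U) => ρ g y * c) :=
    ((hρm g).comp measurable_fst).mul measurable_snd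
  exact (hS g).skew_product hgm (ae_of_all _ fun y => map_mul_left_eq_self mU (ρ g y))

theorem skw_qmp (hS : ∀ g, MeasurePreserving (S g) ν ν) (hρm : ∀ g, Measurable (ρ g)) (g : G) :
    Measure.QuasiMeasurePreserving (skw S ρ g) (ν.prod mU) (ν.prod mU) :=
  (skw_mp hS hρm g).quasiMeasurePreserving

theorem vrot_mp (u : U) :
    MeasurePreserving (fun x : Y × U => (x.1, u * x.2)) (ν.prod mU) (ν.prod mU) := by
  have hgm : Measurable (Function.uncurry fun (_ : Y) (c : U) => u * c) :=
    measurable_const.mul measurable_snd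
  exact (MeasurePreserving.id ν).skew_product hgm
    (ae_of_all _ fun _ => map_mul_left_eq_self mU u)

theorem vtw_mp {σ : Y → U} (hσ : Measurable σ) :
    MeasurePreserving (fun x : Y × U => (x.1, σ x.1 * x.2)) (ν.prod mU) (ν.prod mU) := by
  have hgm : Measurable (Function.uncurry fun (y : Y) (c : U) => σ y * c) :=
    ((hσ.comp measurable_fst)).mul measurable_snd
  exact (MeasurePreserving.id ν).skew_product hgm
    (ae_of_all _ fun y => map_mul_left_eq_self mU (σ y))

theorem aeY' {p : Y → Prop} (h : ∀ᵐ y ∂ν, p y) : ∀ᵐ x ∂(ν.prod mU), p x.1 := by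
  refine qmp_ae' ⟨measurable_fst, ?_⟩ h
  rw [Measure.map_fst_prod, measure_univ, one_smul]

theorem aeSect {p : Y × U → Prop} (h : ∀ᵐ x ∂(ν.prod mU), p x) :
    ∀ᵐ t ∂mU, ∀ᵐ y ∂ν, p (y, t) := by
  have h2 : ∀ᵐ z ∂(mU.prod ν), p (Prod.swap z) :=
    qmp_ae' (Measure.measurePreserving_swap (μ := mU) (ν := ν)).quasiMeasurePreserving h
  exact Measure.ae_ae_of_ae_prod h2

theorem joint_ae {r r' : U → (Y × U) → Circle}
    (hr : Measurable (fun z : U × (Y × U) => r z.1 z.2))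
    (hr' : Measurable (fun z : U × (Y × U) => r' z.1 z.2))
    (h : ∀ u : U, ∀ᵐ x ∂(ν.prod mU), r u x = r' u x) :
    ∀ᵐ z ∂(mU.prod (ν.prod mU)), r z.1 z.2 = r' z.1 z.2 := by
  rw [ae_iff]
  have hN : MeasurableSet {z : U × (Y × U) | r z.1 z.2 = r' z.1 z.2} :=
    MeasureTheory.StronglyMeasurable.measurableSet_eq_fun
      hr.stronglyMeasurable hr'.stronglyMeasurable
  have hset : {z : U × (Y × U) | ¬ r z.1 z.2 = r' z.1 z.2}
      = {z : U × (Y × U) | r z.1 z.2 = r' z.1 z.2}ᶜ := rfl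
  rw [hset, Measure.prod_apply hN.compl]
  have hz : ∀ u : U,
      (ν.prod mU) (Prod.mk u ⁻¹' {z : U × (Y × U) | r z.1 z.2 = r' z.1 z.2}ᶜ) = 0 := by
    intro u
    have : (Prod.mk u ⁻¹' {z : U × (Y × U) | r z.1 z.2 = r' z.1 z.2}ᶜ)
        = {x : Y × U | ¬ r u x = r' u x} := rfl
    rw [this]
    exact ae_iff.1 (h u)
  calc ∫⁻ u, (ν.prod mU) (Prod.mk u ⁻¹' {z : U × (Y × U) | r z.1 z.2 = r' z.1 z.2}ᶜ) ∂mU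
      = ∫⁻ _, 0 ∂mU := lintegral_congr (fun u => hz u)
    _ = 0 := lintegral_zero

/-- A function all of whose vertical derivatives are a.e. 1 descends to `Y`. -/
theorem vinv_descend {r : Y × U → Circle} (hr : Measurable r)
    (h : ∀ u : U, ∀ᵐ x ∂(ν.prod mU), r (x.1, u * x.2) = r x) :
    ∃ rt : Y → Circle, Measurable rt ∧ ∀ᵐ x ∂(ν.prod mU), r x = rt x.1 := by
  have hm2 : Measurable (fun z : U × (Y × U) => r (z.2.1, z.1 * z.2.2)) :=
    hr.comp ((measurable_fst.comp measurable_snd).prodMk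
      (measurable_fst.mul (measurable_snd.comp measurable_snd)))
  have hj : ∀ᵐ z ∂(mU.prod (ν.prod mU)), r (z.2.1, z.1 * z.2.2) = r z.2 :=
    joint_ae hm2 (hr.comp measurable_snd) h
  have hΞ : MeasurePreserving (fun w : (Y × U) × U => (w.1, w.1.2⁻¹ * w.2))
      ((ν.prod mU).prod mU) ((ν.prod mU).prod mU) := by
    have hgm : Measurable (Function.uncurry fun (x : Y × U) (c : U) => x.2⁻¹ * c) :=
      ((measurable_snd.comp measurable_fst).inv).mul measurable_snd
    exact (MeasurePreserving.id (ν.prod mU)).skew_product hgm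
      (ae_of_all _ fun x => map_mul_left_eq_self mU (x.2⁻¹))
  have hΘ : MeasurePreserving (fun w : (Y × U) × U => (w.1.2⁻¹ * w.2, w.1))
      ((ν.prod mU).prod mU) (mU.prod (ν.prod mU)) :=
    (Measure.measurePreserving_swap (μ := ν.prod mU) (ν := mU)).comp hΞ
  have h3 : ∀ᵐ w : (Y × U) × U ∂((ν.prod mU).prod mU),
      r (w.1.1, (w.1.2⁻¹ * w.2) * w.1.2) = r w.1 :=
    qmp_ae' hΘ.quasiMeasurePreserving hj
  have h4 : ∀ᵐ w : (Y × U) × U ∂((ν.prod mU).prod mU), r (w.1.1, w.2) = r w.1 := by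
    filter_upwards [h3] with w hw
    have he : (w.1.2⁻¹ * w.2) * w.1.2 = w.2 := by
      rw [mul_comm w.1.2⁻¹ w.2, mul_assoc, inv_mul_cancel, mul_one]
    rwa [he] at hw
  have h5 : ∀ᵐ z : U × (Y × U) ∂(mU.prod (ν.prod mU)), r (z.2.1, z.1) = r z.2 :=
    qmp_ae' (Measure.measurePreserving_swap (μ := mU) (ν := ν.prod mU)).quasiMeasurePreserving h4
  obtain ⟨u₀, hu₀⟩ := (Measure.ae_ae_of_ae_prod h5).exists
  refine ⟨fun y => r (y, u₀), hr.comp (measurable_id.prodMk measurable_const), ?_⟩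
  filter_upwards [hu₀] with x hx
  exact hx.symm

end Skew

/-! ### Algebraic identities and basic lemmas -/

section Basic

variable {G : Type} [AddCommGroup G] [Countable G]
variable {Y : Type} [MeasurableSpace Y] {ν : Measure Y} [IsProbabilityMeasure ν]
variable {U : Type} [CommGroup U] [TopologicalSpace U] [IsTopologicalGroup U]
  [CompactSpace U] [TopologicalSpace.MetrizableSpace U] [MeasurableSpace U] [BorelSpace U]
variable {mU : Measure U} [mU.IsHaarMeasure] [IsProbabilityMeasure mU]
variable {S : G → Y → Y} {ρ : G → Y → U}
variable {H : Type*} [CommGroup H]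

theorem PhasePoly_zero_iff {T : G → (Y × U) → (Y × U)} {q : Y × U → H} :
    PhasePoly T (ν.prod mU) 0 q ↔ ∀ᵐ x ∂(ν.prod mU), q x = 1 := Iff.rfl

theorem PhasePoly_succ_iff {T : G → (Y × U) → (Y × U)} {d : ℕ} {q : Y × U → H} :
    PhasePoly T (ν.prod mU) (d+1) q ↔
      ∀ g : G, PhasePoly T (ν.prod mU) d (fun x => q (T g x) * (q x)⁻¹) := Iff.rfl

theorem VPoly_zero_iff {q : Y × U → Circle} :
    VPoly ν mU 0 q ↔ ∀ᵐ x ∂(ν.prod mU), q x = 1 := Iff.rfl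

theorem VPoly_succ_iff {v : ℕ} {q : Y × U → Circle} :
    VPoly ν mU (v+1) q ↔ ∀ u : U, VPoly ν mU v (Dv u q) := Iff.rfl

theorem Scancel (hS0 : S 0 = id) (hSadd : ∀ g g', S (g + g') = S g ∘ S g') (h : G) (y : Y) :
    S (-h) (S h y) = y := by
  have h1 : S (-h) (S h y) = (S (-h) ∘ S h) y := rfl
  rw [h1, ← hSadd, neg_add_cancel, hS0]
  rfl

theorem Scancel' (hS0 : S 0 = id) (hSadd : ∀ g g', S (g + g') = S g ∘ S g') (h : G) (y : Y) :
    S h (S (-h) y) = y := by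
  have := Scancel hS0 hSadd (-h) y
  rwa [neg_neg] at this

theorem Scomm (hSadd : ∀ g g', S (g + g') = S g ∘ S g') (a g : G) (y : Y) :
    S a (S g y) = S g (S a y) := by
  have h1 : S a (S g y) = (S a ∘ S g) y := rfl
  have h2 : S g (S a y) = (S g ∘ S a) y := rfl
  rw [h1, h2, ← hSadd, ← hSadd, add_comm]

theorem Dv_measurable {q : Y × U → Circle}
    (hq : Measurable q) (u : U) : Measurable (Dv u q) :=
  (hq.comp (measurable_fst.prodMk (measurable_const.mul measurable_snd))).mul hq.inv

theorem Mtw_measurable {σ : Y → U} (hσ : Measurable σ) {q : Y × U → Circle}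
    (hq : Measurable q) : Measurable (Mtw σ q) :=
  (hq.comp (measurable_fst.prodMk ((hσ.comp measurable_fst).mul measurable_snd))).mul hq.inv

/-- `Dv` commutes with multiplicative derivatives along the skew action, exactly. -/
theorem Dv_skw_comm (u : U) (q : Y × U → Circle) (g : G) :
    (fun x => Dv u q (skw S ρ g x) * (Dv u q x)⁻¹)
      = Dv u (fun x => q (skw S ρ g x) * (q x)⁻¹) := by
  funext x
  simp [Dv, skw, mul_comm, mul_assoc, mul_left_comm]

/-- `Dv` commutes with `Mtw`, exactly. -/
theorem Dv_Mtw_comm (u : U) (σ : Y → U) (q : Y × U → Circle) :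
    Dv u (Mtw σ q) = Mtw σ (Dv u q) := by
  funext x
  simp [Dv, Mtw, mul_comm, mul_assoc, mul_left_comm]

/-- `Dv` of a product. -/
theorem Dv_mul (u : U) (a b : Y × U → Circle) :
    Dv u (fun x => a x * b x) = fun x => Dv u a x * Dv u b x := by
  funext x
  simp [Dv, mul_comm, mul_assoc, mul_left_comm]

theorem Mtw_mul (σ : Y → U) (a b : Y × U → Circle) :
    Mtw σ (fun x => a x * b x) = fun x => Mtw σ a x * Mtw σ b x := by
  funext x
  simp [Mtw, mul_comm, mul_assoc, mul_left_comm]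

theorem VPoly.succ_of {v : ℕ} {q : Y × U → Circle} (h : VPoly ν mU v q) :
    VPoly ν mU (v+1) q := by
  induction v generalizing q with
  | zero =>
    intro u
    have h2 := qmp_ae' (vrot_mp (ν := ν) (mU := mU) u).quasiMeasurePreserving h
    filter_upwards [h, h2] with x h1 h2
    show q (x.1, u * x.2) * (q x)⁻¹ = 1
    rw [h1, h2, mul_inv_cancel]
  | succ v ih => exact fun u => ih (h u)

theorem VPoly.mono {v v' : ℕ} (hvv : v ≤ v') {q : Y × U → Circle} (h : VPoly ν mU v q) :
    VPoly ν mU v' q := by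
  induction hvv with
  | refl => exact h
  | step _ ih => exact ih.succ_of

theorem VPoly_one_descend {q : Y × U → Circle} (hq : Measurable q)
    (h : VPoly ν mU 1 q) :
    ∃ rt : Y → Circle, Measurable rt ∧ ∀ᵐ x ∂(ν.prod mU), q x = rt x.1 := by
  refine vinv_descend hq fun u => ?_
  have h1 : ∀ᵐ x ∂(ν.prod mU), Dv u q x = 1 := h u
  filter_upwards [h1] with x hx
  have : q (x.1, u * x.2) * (q x)⁻¹ = 1 := hx
  exact mul_inv_eq_one.1 this

/-- vertical derivatives of phase polynomials drop degree (uses ergodicity). -/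
theorem dv_phasePoly (hS : ∀ g, MeasurePreserving (S g) ν ν) (hρm : ∀ g, Measurable (ρ g))
    (herg : IsErgodicAction (skw S ρ) (ν.prod mU))
    {d : ℕ} {q : Y × U → Circle} (hq : Measurable q)
    (h : PhasePoly (skw S ρ) (ν.prod mU) (d+1) q) (u : U) :
    PhasePoly (skw S ρ) (ν.prod mU) d (Dv u q) := by
  induction d generalizing q with
  | zero =>
    have hinv : ∀ g : G, ∀ᵐ x ∂(ν.prod mU), q (skw S ρ g x) = q x := by
      intro g
      filter_upwards [h g] with x hx
      exact mul_inv_eq_one.1 hx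
    obtain ⟨c, hc⟩ := ergodic_ae_const herg hq hinv
    have hc2 := qmp_ae' (vrot_mp (ν := ν) (mU := mU) u).quasiMeasurePreserving hc
    filter_upwards [hc, hc2] with x h1 h2
    show q (x.1, u * x.2) * (q x)⁻¹ = 1
    rw [h1, h2, mul_inv_cancel]
  | succ d ih =>
    intro g
    have hder : PhasePoly (skw S ρ) (ν.prod mU) d
        (Dv u (fun x => q (skw S ρ g x) * (q x)⁻¹)) :=
      ih ((hq.comp (skw_measurable hS hρm g)).mul hq.inv) (h g)
    rw [← Dv_skw_comm] at hder
    exact hder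

theorem poly_to_vpoly (hS : ∀ g, MeasurePreserving (S g) ν ν) (hρm : ∀ g, Measurable (ρ g))
    (herg : IsErgodicAction (skw S ρ) (ν.prod mU))
    {d : ℕ} {q : Y × U → Circle} (hq : Measurable q)
    (h : PhasePoly (skw S ρ) (ν.prod mU) d q) : VPoly ν mU d q := by
  induction d generalizing q with
  | zero => exact h
  | succ d ih =>
    intro u
    exact ih (Dv_measurable hq u) (dv_phasePoly hS hρm herg hq h u)

theorem vpoly_Dskw (hS : ∀ g, MeasurePreserving (S g) ν ν) (hρm : ∀ g, Measurable (ρ g))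
    {v : ℕ} {q : Y × U → Circle} (h : VPoly ν mU v q) (g : G) :
    VPoly ν mU v (fun x => q (skw S ρ g x) * (q x)⁻¹) := by
  induction v generalizing q with
  | zero =>
    have h2 := qmp_ae' (skw_qmp hS hρm g) h
    filter_upwards [h, h2] with x h1 h2
    show q (skw S ρ g x) * (q x)⁻¹ = 1
    rw [h1, h2, mul_inv_cancel]
  | succ v ih =>
    intro u
    rw [← Dv_skw_comm]
    exact ih (h u)

/-- key vertical-degree drop: `Mtw` strictly lowers vertical degree. -/
theorem vpoly_Mtw {v : ℕ} {q : Y × U → Circle} (hq : Measurable q)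
    {σ : Y → U} (hσ : Measurable σ)
    (h : VPoly ν mU (v+1) q) : VPoly ν mU v (Mtw σ q) := by
  induction v generalizing q with
  | zero =>
    obtain ⟨rt, hrt, hq1⟩ := VPoly_one_descend hq h
    have h2 := qmp_ae' (vtw_mp (ν := ν) (mU := mU) hσ).quasiMeasurePreserving hq1
    filter_upwards [hq1, h2] with x h1 h2
    show q (x.1, σ x.1 * x.2) * (q x)⁻¹ = 1
    rw [h1, h2, mul_inv_cancel]
  | succ v ih =>
    intro u
    rw [Dv_Mtw_comm]
    exact ih (Dv_measurable hq u) (h u)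

end Basic

/-! ### Commutation and composition -/

section Comp

variable {G : Type} [AddCommGroup G] [Countable G]
variable {Y : Type} [MeasurableSpace Y] {ν : Measure Y} [IsProbabilityMeasure ν]
variable {U : Type} [CommGroup U] [TopologicalSpace U] [IsTopologicalGroup U]
  [CompactSpace U] [TopologicalSpace.MetrizableSpace U] [MeasurableSpace U] [BorelSpace U]
variable {mU : Measure U} [mU.IsHaarMeasure] [IsProbabilityMeasure mU]
variable {S : G → Y → Y} {ρ : G → Y → U}
variable {H : Type*} [CommGroup H]

theorem skw_comm_ae (hS : ∀ g, MeasurePreserving (S g) ν ν)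
    (hSadd : ∀ g g', S (g + g') = S g ∘ S g')
    (hρc : ∀ g g', ∀ᵐ y ∂ν, ρ (g + g') y = ρ g y * ρ g' (S g y)) (g h : G) :
    ∀ᵐ x ∂(ν.prod mU), skw S ρ h (skw S ρ g x) = skw S ρ g (skw S ρ h x) := by
  filter_upwards [aeY' (hρc g h), aeY' (hρc h g)] with x e1 e2
  have e3 : ρ (g + h) x.1 = ρ h x.1 * ρ g (S h x.1) := by
    rw [add_comm]; exact e2
  show (S h (S g x.1), ρ h (S g x.1) * (ρ g x.1 * x.2))
      = (S g (S h x.1), ρ g (S h x.1) * (ρ h x.1 * x.2))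
  rw [Prod.mk.injEq]
  constructor
  · exact Scomm hSadd h g x.1
  · rw [← mul_assoc, ← mul_assoc, mul_comm (ρ h (S g x.1)) (ρ g x.1), ← e1, e3,
      mul_comm (ρ h x.1) (ρ g (S h x.1))]

theorem phasePoly_comp_skw (hS : ∀ g, MeasurePreserving (S g) ν ν)
    (hSadd : ∀ g g', S (g + g') = S g ∘ S g')
    (hρm : ∀ g, Measurable (ρ g))
    (hρc : ∀ g g', ∀ᵐ y ∂ν, ρ (g + g') y = ρ g y * ρ g' (S g y))
    {d : ℕ} {q : Y × U → Circle} (h : PhasePoly (skw S ρ) (ν.prod mU) d q) (a : G) :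
    PhasePoly (skw S ρ) (ν.prod mU) d (fun x => q (skw S ρ a x)) :=
  PhasePoly.comp_commuting (skw_qmp hS hρm) (skw_qmp hS hρm a)
    (fun g => skw_comm_ae hS hSadd hρc g a) h

theorem phasePoly_comp_S (hS : ∀ g, MeasurePreserving (S g) ν ν)
    (hSadd : ∀ g g', S (g + g') = S g ∘ S g')
    {e : ℕ} {φ : Y → H} (h : PhasePoly S ν e φ) (a : G) :
    PhasePoly S ν e (fun y => φ (S a y)) :=
  PhasePoly.comp_commuting (fun g => (hS g).quasiMeasurePreserving)
    (hS a).quasiMeasurePreserving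
    (fun g => ae_of_all _ fun y => Scomm hSadd a g y) h

theorem factor_erg (herg : IsErgodicAction (skw S ρ) (ν.prod mU)) :
    IsErgodicAction S ν := by
  intro A hA hinv
  have key := herg (A ×ˢ (Set.univ : Set U)) (hA.prod MeasurableSet.univ) ?_
  · rcases key with h0 | h1
    · left
      rw [Measure.prod_prod, measure_univ, mul_one] at h0
      exact h0
    · right
      rw [Measure.prod_prod, measure_univ, mul_one] at h1
      exact h1
  · intro g
    have hpre : (skw S ρ g ⁻¹' (A ×ˢ (Set.univ : Set U)))
        = (S g ⁻¹' A) ×ˢ (Set.univ : Set U) := by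
      ext x
      simp [skw, Set.mem_prod]
    rw [hpre]
    have hsd : ((S g ⁻¹' A) ×ˢ (Set.univ : Set U)) ∆ (A ×ˢ (Set.univ : Set U))
        = ((S g ⁻¹' A) ∆ A) ×ˢ (Set.univ : Set U) := by
      ext x
      simp only [Set.mem_symmDiff, Set.mem_prod, Set.mem_preimage, Set.mem_univ,
        and_true]
    rw [hsd, Measure.prod_prod, measure_univ, mul_one]
    exact hinv g

/-- The master exact identity for derivatives of twisted vertical derivatives. -/
theorem star_id (hS0 : S 0 = id) (hSadd : ∀ g g', S (g + g') = S g ∘ S g')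
    (σ : Y → U) (q : Y × U → Circle) (h : G) (x : Y × U) :
    Mtw σ q (skw S ρ h x) * (Mtw σ q x)⁻¹
      = (Mtw (fun y => σ (S (-h) y)) (Mtw (fun y => σ y * (σ (S (-h) y))⁻¹) q) (skw S ρ h x)
          * Mtw (fun y => σ y * (σ (S (-h) y))⁻¹) q (skw S ρ h x))
        * Mtw σ (fun z => q (skw S ρ h z) * (q z)⁻¹) x := by
  obtain ⟨y, s⟩ := x
  simp only [Mtw, skw, Dv]
  rw [Scancel hS0 hSadd h y]
  simp [mul_comm, mul_assoc, mul_left_comm, mul_inv_rev, inv_mul_cancel_left,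
    mul_inv_cancel_left, inv_inv]

/-- The exact identity for derivatives of sections. -/
theorem sect_id (hS0 : S 0 = id) (hSadd : ∀ g g', S (g + g') = S g ∘ S g')
    (q : Y × U → Circle) (h : G) (t₀ : U) (x : Y × U) :
    (fun z : Y × U => q (z.1, t₀)) (skw S ρ h x) * ((fun z : Y × U => q (z.1, t₀)) x)⁻¹
      = (fun z : Y × U => q (skw S ρ h (z.1, t₀)) * (q (z.1, t₀))⁻¹) x
        * ((fun z : Y × U => Mtw (fun y => ρ h (S (-h) y)) q (z.1, t₀)) (skw S ρ h x))⁻¹ := by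
  obtain ⟨y, s⟩ := x
  simp only [Mtw, skw]
  rw [Scancel hS0 hSadd h y]
  simp [mul_comm, mul_assoc, mul_left_comm, mul_inv_rev, inv_mul_cancel_left,
    mul_inv_cancel_left, inv_inv]

end Comp

/-! ### The master lemmas -/

section Master

variable {G : Type} [AddCommGroup G] [Countable G]
variable {Y : Type} [MeasurableSpace Y] {ν : Measure Y} [IsProbabilityMeasure ν]
variable {U : Type} [CommGroup U] [TopologicalSpace U] [IsTopologicalGroup U]
  [CompactSpace U] [TopologicalSpace.MetrizableSpace U] [MeasurableSpace U] [BorelSpace U]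
variable {mU : Measure U} [mU.IsHaarMeasure] [IsProbabilityMeasure mU]
variable {S : G → Y → Y} {ρ : G → Y → U}

/-- Twisting a phase polynomial by a phase-polynomial cocycle twist yields a phase
polynomial, with degree controlled in terms of the vertical degree `v`, the degree `j`
of the twist and the degree `d` of the polynomial. -/
theorem master (hS : ∀ g, MeasurePreserving (S g) ν ν) (hS0 : S 0 = id)
    (hSadd : ∀ g g', S (g + g') = S g ∘ S g')
    (hρm : ∀ g, Measurable (ρ g))
    (hρc : ∀ g g', ∀ᵐ y ∂ν, ρ (g + g') y = ρ g y * ρ g' (S g y))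
    (herg : IsErgodicAction (skw S ρ) (ν.prod mU))
    (v j d : ℕ) {q : Y × U → Circle} {σ : Y → U}
    (hqm : Measurable q) (hσm : Measurable σ)
    (hv : VPoly ν mU v q) (hd : PhasePoly (skw S ρ) (ν.prod mU) d q)
    (hσ : PhasePoly S ν j σ) :
    PhasePoly (skw S ρ) (ν.prod mU) (NmasterF v j d) (Mtw σ q) := by
  match v, j, d with
  | 0, j, d =>
    simp only [NmasterF]
    exact vpoly_Mtw hqm hσm hv.succ_of
  | 1, j, d =>
    simp only [NmasterF]
    exact vpoly_Mtw hqm hσm hv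
  | (v+2), 0, d =>
    simp only [NmasterF]
    have hσ1 : ∀ᵐ y ∂ν, σ y = 1 := hσ
    filter_upwards [aeY' hσ1] with x hx
    show q (x.1, σ x.1 * x.2) * (q x)⁻¹ = 1
    rw [hx, one_mul]
    exact mul_inv_cancel _
  | (v+2), 1, d =>
    simp only [NmasterF]
    -- σ is S-invariant, hence a.e. constant by ergodicity of the factor
    have hinv : ∀ g : G, ∀ᵐ y ∂ν, σ (S g y) = σ y := by
      intro g
      filter_upwards [hσ g] with y hy
      exact mul_inv_eq_one.1 hy
    obtain ⟨u₀, hu₀⟩ := ergodic_ae_const (factor_erg herg) hσm hinv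
    have hcongr : ∀ᵐ x ∂(ν.prod mU), Dv u₀ q x = Mtw σ q x := by
      filter_upwards [aeY' hu₀] with x hx
      show q (x.1, u₀ * x.2) * (q x)⁻¹ = q (x.1, σ x.1 * x.2) * (q x)⁻¹
      rw [hx]
    refine PhasePoly.congr (skw_qmp hS hρm) hcongr ?_
    match d, hd with
    | 0, hd =>
      have h2 := qmp_ae' (vrot_mp (ν := ν) (mU := mU) u₀).quasiMeasurePreserving hd
      filter_upwards [hd, h2] with x h1 h2
      show q (x.1, u₀ * x.2) * (q x)⁻¹ = 1
      rw [h1, h2, mul_inv_cancel]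
    | (e+1), hd =>
      exact (dv_phasePoly hS hρm herg hqm hd u₀).succ_of (skw_qmp hS hρm)
  | (v+2), (j+2), 0 =>
    simp only [NmasterF]
    have h2 := qmp_ae' (vtw_mp (ν := ν) (mU := mU) hσm).quasiMeasurePreserving hd
    filter_upwards [hd, h2] with x h1 h2
    show q (x.1, σ x.1 * x.2) * (q x)⁻¹ = 1
    rw [h1, h2, mul_inv_cancel]
  | (v+2), (j+2), (d+1) =>
    simp only [NmasterF]
    intro h
    -- the three pieces
    set τ : Y → U := fun y => σ y * (σ (S (-h) y))⁻¹ with hτdef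
    set σ' : Y → U := fun y => σ (S (-h) y) with hσ'def
    have hτm : Measurable τ := hσm.mul ((hσm.comp (hS (-h)).measurable).inv)
    have hσ'm : Measurable σ' := hσm.comp (hS (-h)).measurable
    -- τ is a polynomial of degree < j+1
    have hτp : PhasePoly S ν (j+1) τ := by
      have h1 : PhasePoly S ν (j+1) (fun y => σ (S h y) * (σ y)⁻¹) := hσ h
      have h2 := phasePoly_comp_S hS hSadd h1 (-h)
      refine PhasePoly.congr (fun g => (hS g).quasiMeasurePreserving)
        (ae_of_all _ fun y => ?_) h2
      show σ (S h (S (-h) y)) * (σ (S (-h) y))⁻¹ = τ y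
      rw [Scancel' hS0 hSadd h y]
    have hσ'p : PhasePoly S ν (j+2) σ' := phasePoly_comp_S hS hSadd hσ (-h)
    -- recursive call: Mtw τ q is a polynomial (lower twist degree)
    have hMτ : PhasePoly (skw S ρ) (ν.prod mU) (NmasterF (v+2) (j+1) (d+1)) (Mtw τ q) :=
      master hS hS0 hSadd hρm hρc herg (v+2) (j+1) (d+1) hqm hτm hv hd hτp
    have hMτm : Measurable (Mtw τ q) := Mtw_measurable hτm hqm
    have hMτv : VPoly ν mU (v+1) (Mtw τ q) := vpoly_Mtw hqm hτm hv
    -- recursive call: Mtw σ' (Mtw τ q) (lower vertical degree)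
    have hMστ : PhasePoly (skw S ρ) (ν.prod mU)
        (NmasterF (v+1) (j+2) (NmasterF (v+2) (j+1) (d+1))) (Mtw σ' (Mtw τ q)) :=
      master hS hS0 hSadd hρm hρc herg (v+1) (j+2) (NmasterF (v+2) (j+1) (d+1))
        hMτm hσ'm hMτv hMτ hσ'p
    -- recursive call: Mtw σ (Δ_h q) (lower polynomial degree)
    have hMΔ : PhasePoly (skw S ρ) (ν.prod mU) (NmasterF (v+2) (j+2) d)
        (Mtw σ (fun z => q (skw S ρ h z) * (q z)⁻¹)) :=
      master hS hS0 hSadd hρm hρc herg (v+2) (j+2) d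
        ((hqm.comp (skw_measurable hS hρm h)).mul hqm.inv) hσm
        (vpoly_Dskw hS hρm hv h) (hd h) hσ
    -- assemble via the exact identity
    have hfun : (fun x => Mtw σ q (skw S ρ h x) * (Mtw σ q x)⁻¹)
        = fun x => (Mtw σ' (Mtw τ q) (skw S ρ h x) * Mtw τ q (skw S ρ h x))
            * Mtw σ (fun z => q (skw S ρ h z) * (q z)⁻¹) x := by
      funext x
      exact star_id hS0 hSadd σ q h x
    rw [hfun]
    set N := max (NmasterF (v+1) (j+2) (NmasterF (v+2) (j+1) (d+1)))
        (max (NmasterF (v+2) (j+1) (d+1)) (NmasterF (v+2) (j+2) d)) with hN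
    have hq1 : PhasePoly (skw S ρ) (ν.prod mU) N (fun x => Mtw σ' (Mtw τ q) (skw S ρ h x)) :=
      PhasePoly.mono (skw_qmp hS hρm) (le_max_left _ _)
        (phasePoly_comp_skw hS hSadd hρm hρc hMστ h)
    have hq2 : PhasePoly (skw S ρ) (ν.prod mU) N (fun x => Mtw τ q (skw S ρ h x)) :=
      PhasePoly.mono (skw_qmp hS hρm) (le_trans (le_max_left _ _) (le_max_right _ _))
        (phasePoly_comp_skw hS hSadd hρm hρc hMτ h)
    have hq3 : PhasePoly (skw S ρ) (ν.prod mU) N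
        (Mtw σ (fun z => q (skw S ρ h z) * (q z)⁻¹)) :=
      PhasePoly.mono (skw_qmp hS hρm) (le_trans (le_max_right _ _) (le_max_right _ _)) hMΔ
    exact (hq1.mul hq2).mul hq3
termination_by (v, j, d)

end Master

section MasterG

variable {G : Type} [AddCommGroup G] [Countable G]
variable {Y : Type} [MeasurableSpace Y] {ν : Measure Y} [IsProbabilityMeasure ν]
variable {U : Type} [CommGroup U] [TopologicalSpace U] [IsTopologicalGroup U]
  [CompactSpace U] [TopologicalSpace.MetrizableSpace U] [MeasurableSpace U] [BorelSpace U]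
variable {mU : Measure U} [mU.IsHaarMeasure] [IsProbabilityMeasure mU]
variable {S : G → Y → Y} {ρ : G → Y → U}

/-- `Dv u F` is a phase polynomial of degree `< max m̂ 1` for a good function `F`. -/
theorem dvF_poly (hS : ∀ g, MeasurePreserving (S g) ν ν)
    (hρm : ∀ g, Measurable (ρ g))
    (herg : IsErgodicAction (skw S ρ) (ν.prod mU))
    {mh : ℕ} {F : Y × U → Circle} {w q : G → Y × U → Circle}
    (hqm : ∀ g, Measurable (q g))
    (hgood : ∀ g x, F (skw S ρ g x) * (F x)⁻¹ = w g x * q g x)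
    (hw : ∀ g, VPoly ν mU 1 (w g))
    (hq : ∀ g, PhasePoly (skw S ρ) (ν.prod mU) mh (q g))
    (u : U) :
    PhasePoly (skw S ρ) (ν.prod mU) (max mh 1) (Dv u F) := by
  have hder : ∀ h : G, (fun x => Dv u F (skw S ρ h x) * (Dv u F x)⁻¹)
      = fun x => Dv u (w h) x * Dv u (q h) x := by
    intro h
    rw [Dv_skw_comm]
    have : (fun x => F (skw S ρ h x) * (F x)⁻¹) = fun x => w h x * q h x := by
      funext x; exact hgood h x
    rw [this, Dv_mul]
  have hw1 : ∀ h : G, ∀ᵐ x ∂(ν.prod mU), Dv u (w h) x = 1 := fun h => hw h u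
  match mh, hq with
  | 0, hq =>
    -- q h is a.e. 1
    refine fun h => ?_
    show PhasePoly (skw S ρ) (ν.prod mU) 0 _
    rw [hder h]
    have hq1 : ∀ᵐ x ∂(ν.prod mU), Dv u (q h) x = 1 := by
      have h2 := qmp_ae' (vrot_mp (ν := ν) (mU := mU) u).quasiMeasurePreserving (hq h)
      filter_upwards [hq h, h2] with x h1 h2
      show q h (x.1, u * x.2) * (q h x)⁻¹ = 1
      rw [h1, h2, mul_inv_cancel]
    filter_upwards [hw1 h, hq1] with x h1 h2
    rw [h1, h2, mul_one]
  | (n+1), hq =>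
    have hmax : max (n+1) 1 = n + 1 := max_eq_left (Nat.succ_le_succ (Nat.zero_le n))
    rw [hmax]
    intro h
    rw [hder h]
    have hqd : PhasePoly (skw S ρ) (ν.prod mU) n (Dv u (q h)) :=
      dv_phasePoly hS hρm herg (hqm h) (hq h) u
    have hwd : PhasePoly (skw S ρ) (ν.prod mU) n (fun x => Dv u (w h) x) := by
      refine PhasePoly.mono (skw_qmp hS hρm) (Nat.zero_le n) ?_
      exact hw1 h
    exact hwd.mul hqd

/-- Master lemma for good functions: recursion on the degree of the twist. -/
theorem masterG (hS : ∀ g, MeasurePreserving (S g) ν ν) (hS0 : S 0 = id)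
    (hSadd : ∀ g g', S (g + g') = S g ∘ S g')
    (hρm : ∀ g, Measurable (ρ g))
    (hρc : ∀ g g', ∀ᵐ y ∂ν, ρ (g + g') y = ρ g y * ρ g' (S g y))
    (herg : IsErgodicAction (skw S ρ) (ν.prod mU))
    (mh v j : ℕ) {F : Y × U → Circle} {w q : G → Y × U → Circle} {σ : Y → U}
    (hFm : Measurable F) (hwm : ∀ g, Measurable (w g)) (hqm : ∀ g, Measurable (q g))
    (hσm : Measurable σ)
    (hgood : ∀ g x, F (skw S ρ g x) * (F x)⁻¹ = w g x * q g x)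
    (hw : ∀ g, VPoly ν mU 1 (w g))
    (hq : ∀ g, PhasePoly (skw S ρ) (ν.prod mU) mh (q g))
    (hvF : VPoly ν mU (v+1) F)
    (hσ : PhasePoly S ν j σ) :
    PhasePoly (skw S ρ) (ν.prod mU) (NmasterG mh v j) (Mtw σ F) := by
  match j, hσ with
  | 0, hσ =>
    show PhasePoly (skw S ρ) (ν.prod mU) 0 (Mtw σ F)
    have hσ1 : ∀ᵐ y ∂ν, σ y = 1 := hσ
    filter_upwards [aeY' hσ1] with x hx
    show F (x.1, σ x.1 * x.2) * (F x)⁻¹ = 1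
    rw [hx, one_mul]
    exact mul_inv_cancel _
  | 1, hσ =>
    show PhasePoly (skw S ρ) (ν.prod mU) (max mh 1) (Mtw σ F)
    have hinv : ∀ g : G, ∀ᵐ y ∂ν, σ (S g y) = σ y := by
      intro g
      filter_upwards [hσ g] with y hy
      exact mul_inv_eq_one.1 hy
    obtain ⟨u₀, hu₀⟩ := ergodic_ae_const (factor_erg herg) hσm hinv
    have hcongr : ∀ᵐ x ∂(ν.prod mU), Dv u₀ F x = Mtw σ F x := by
      filter_upwards [aeY' hu₀] with x hx
      show F (x.1, u₀ * x.2) * (F x)⁻¹ = F (x.1, σ x.1 * x.2) * (F x)⁻¹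
      rw [hx]
    exact PhasePoly.congr (skw_qmp hS hρm) hcongr
      (dvF_poly hS hρm herg hqm hgood hw hq u₀)
  | (j+2), hσ =>
    show PhasePoly (skw S ρ) (ν.prod mU)
      (max (NmasterF v (j+2) (NmasterG mh v (j+1)))
        (max (NmasterG mh v (j+1)) (NmasterF mh (j+2) mh)) + 1) (Mtw σ F)
    intro h
    set τ : Y → U := fun y => σ y * (σ (S (-h) y))⁻¹ with hτdef
    set σ' : Y → U := fun y => σ (S (-h) y) with hσ'def
    have hτm : Measurable τ := hσm.mul ((hσm.comp (hS (-h)).measurable).inv)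
    have hσ'm : Measurable σ' := hσm.comp (hS (-h)).measurable
    have hτp : PhasePoly S ν (j+1) τ := by
      have h1 : PhasePoly S ν (j+1) (fun y => σ (S h y) * (σ y)⁻¹) := hσ h
      have h2 := phasePoly_comp_S hS hSadd h1 (-h)
      refine PhasePoly.congr (fun g => (hS g).quasiMeasurePreserving)
        (ae_of_all _ fun y => ?_) h2
      show σ (S h (S (-h) y)) * (σ (S (-h) y))⁻¹ = τ y
      rw [Scancel' hS0 hSadd h y]
    have hσ'p : PhasePoly S ν (j+2) σ' := phasePoly_comp_S hS hSadd hσ (-h)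
    -- Mtw τ F is a polynomial by recursion on j
    have hMτ : PhasePoly (skw S ρ) (ν.prod mU) (NmasterG mh v (j+1)) (Mtw τ F) :=
      masterG hS hS0 hSadd hρm hρc herg mh v (j+1) hFm hwm hqm hτm hgood hw hq hvF hτp
    have hMτm : Measurable (Mtw τ F) := Mtw_measurable hτm hFm
    have hMτv : VPoly ν mU v (Mtw τ F) := vpoly_Mtw hFm hτm hvF
    -- Mtw σ' (Mtw τ F) via the polynomial master lemma
    have hMστ : PhasePoly (skw S ρ) (ν.prod mU)
        (NmasterF v (j+2) (NmasterG mh v (j+1))) (Mtw σ' (Mtw τ F)) :=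
      master hS hS0 hSadd hρm hρc herg v (j+2) (NmasterG mh v (j+1))
        hMτm hσ'm hMτv hMτ hσ'p
    -- Mtw σ (Δ_h F) = Mtw σ (w h) * Mtw σ (q h), a.e. = Mtw σ (q h)
    have hMΔ : PhasePoly (skw S ρ) (ν.prod mU) (NmasterF mh (j+2) mh)
        (Mtw σ (fun z => F (skw S ρ h z) * (F z)⁻¹)) := by
      have hqmaster : PhasePoly (skw S ρ) (ν.prod mU) (NmasterF mh (j+2) mh)
          (Mtw σ (q h)) :=
        master hS hS0 hSadd hρm hρc herg mh (j+2) mh (hqm h) hσm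
          (poly_to_vpoly hS hρm herg (hqm h) (hq h)) (hq h) hσ
      have hw0 : ∀ᵐ x ∂(ν.prod mU), Mtw σ (w h) x = 1 := by
        obtain ⟨rt, hrt, hw1⟩ := VPoly_one_descend (hwm h) (hw h)
        have h2 := qmp_ae' (vtw_mp (ν := ν) (mU := mU) hσm).quasiMeasurePreserving hw1
        filter_upwards [hw1, h2] with x h1 h2
        show w h (x.1, σ x.1 * x.2) * (w h x)⁻¹ = 1
        rw [h1, h2, mul_inv_cancel]
      have hgf : (fun z => F (skw S ρ h z) * (F z)⁻¹) = fun z => w h z * q h z := by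
        funext z; exact hgood h z
      rw [hgf, Mtw_mul]
      refine PhasePoly.congr (skw_qmp hS hρm) ?_ hqmaster
      filter_upwards [hw0] with x hx
      rw [hx, one_mul]
    have hfun : (fun x => Mtw σ F (skw S ρ h x) * (Mtw σ F x)⁻¹)
        = fun x => (Mtw σ' (Mtw τ F) (skw S ρ h x) * Mtw τ F (skw S ρ h x))
            * Mtw σ (fun z => F (skw S ρ h z) * (F z)⁻¹) x := by
      funext x
      exact star_id hS0 hSadd σ F h x
    rw [hfun]
    set N := max (NmasterF v (j+2) (NmasterG mh v (j+1)))
        (max (NmasterG mh v (j+1)) (NmasterF mh (j+2) mh)) with hN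
    have hq1 : PhasePoly (skw S ρ) (ν.prod mU) N
        (fun x => Mtw σ' (Mtw τ F) (skw S ρ h x)) :=
      PhasePoly.mono (skw_qmp hS hρm) (le_max_left _ _)
        (phasePoly_comp_skw hS hSadd hρm hρc hMστ h)
    have hq2 : PhasePoly (skw S ρ) (ν.prod mU) N (fun x => Mtw τ F (skw S ρ h x)) :=
      PhasePoly.mono (skw_qmp hS hρm) (le_trans (le_max_left _ _) (le_max_right _ _))
        (phasePoly_comp_skw hS hSadd hρm hρc hMτ h)
    have hq3 : PhasePoly (skw S ρ) (ν.prod mU) N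
        (Mtw σ (fun z => F (skw S ρ h z) * (F z)⁻¹)) :=
      PhasePoly.mono (skw_qmp hS hρm) (le_trans (le_max_right _ _) (le_max_right _ _)) hMΔ
    exact (hq1.mul hq2).mul hq3

end MasterG

section PolySec

variable {G : Type} [AddCommGroup G] [Countable G]
variable {Y : Type} [MeasurableSpace Y] {ν : Measure Y} [IsProbabilityMeasure ν]
variable {U : Type} [CommGroup U] [TopologicalSpace U] [IsTopologicalGroup U]
  [CompactSpace U] [TopologicalSpace.MetrizableSpace U] [MeasurableSpace U] [BorelSpace U]
variable {mU : Measure U} [mU.IsHaarMeasure] [IsProbabilityMeasure mU]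
variable {S : G → Y → Y} {ρ : G → Y → U}

/-- sections of phase polynomials at a.e. point of the fibre are phase polynomials. -/
theorem polysec (hS : ∀ g, MeasurePreserving (S g) ν ν) (hS0 : S 0 = id)
    (hSadd : ∀ g g', S (g + g') = S g ∘ S g')
    (hρm : ∀ g, Measurable (ρ g))
    (hρc : ∀ g g', ∀ᵐ y ∂ν, ρ (g + g') y = ρ g y * ρ g' (S g y))
    (herg : IsErgodicAction (skw S ρ) (ν.prod mU))
    (k : ℕ) (hρp : ∀ g, PhasePoly S ν k (ρ g))
    (v d : ℕ) {q : Y × U → Circle} (hqm : Measurable q)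
    (hv : VPoly ν mU v q) (hd : PhasePoly (skw S ρ) (ν.prod mU) d q) :
    ∀ᵐ t₀ ∂mU, PhasePoly (skw S ρ) (ν.prod mU) (NsecF k v d)
      (fun x : Y × U => q (x.1, t₀)) := by
  match v, d with
  | 0, d =>
    obtain ⟨rt, hrt, hq1⟩ := VPoly_one_descend hqm hv.succ_of
    filter_upwards [aeSect hq1] with t₀ ht₀
    simp only [NsecF]
    have e1 : ∀ᵐ x ∂(ν.prod mU), q (x.1, t₀) = rt x.1 := aeY' ht₀
    refine PhasePoly.congr (skw_qmp hS hρm) ?_ hd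
    filter_upwards [hq1, e1] with x h1 h2
    rw [h1, h2]
  | 1, d =>
    obtain ⟨rt, hrt, hq1⟩ := VPoly_one_descend hqm hv
    filter_upwards [aeSect hq1] with t₀ ht₀
    simp only [NsecF]
    have e1 : ∀ᵐ x ∂(ν.prod mU), q (x.1, t₀) = rt x.1 := aeY' ht₀
    refine PhasePoly.congr (skw_qmp hS hρm) ?_ hd
    filter_upwards [hq1, e1] with x h1 h2
    rw [h1, h2]
  | (v+2), 0 =>
    have hq1 : ∀ᵐ x ∂(ν.prod mU), q x = 1 := hd
    filter_upwards [aeSect hq1] with t₀ ht₀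
    simp only [NsecF]
    exact aeY' ht₀
  | (v+2), (d+1) =>
    have hA : ∀ h : G, ∀ᵐ t₀ ∂mU, PhasePoly (skw S ρ) (ν.prod mU) (NsecF k (v+2) d)
        (fun x : Y × U => (fun z => q (skw S ρ h z) * (q z)⁻¹) (x.1, t₀)) := by
      intro h
      exact polysec hS hS0 hSadd hρm hρc herg k hρp (v+2) d
        ((hqm.comp (skw_measurable hS hρm h)).mul hqm.inv)
        (vpoly_Dskw hS hρm hv h) (hd h)
    have hB : ∀ h : G, ∀ᵐ t₀ ∂mU, PhasePoly (skw S ρ) (ν.prod mU)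
        (NsecF k (v+1) (NmasterF (v+2) k (d+1)))
        (fun x : Y × U => Mtw (fun y => ρ h (S (-h) y)) q (x.1, t₀)) := by
      intro h
      have hσm : Measurable (fun y => ρ h (S (-h) y)) :=
        (hρm h).comp (hS (-h)).measurable
      have hσp : PhasePoly S ν k (fun y => ρ h (S (-h) y)) :=
        phasePoly_comp_S hS hSadd (hρp h) (-h)
      have hM : PhasePoly (skw S ρ) (ν.prod mU) (NmasterF (v+2) k (d+1))
          (Mtw (fun y => ρ h (S (-h) y)) q) :=
        master hS hS0 hSadd hρm hρc herg (v+2) k (d+1) hqm hσm hv hd hσp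
      exact polysec hS hS0 hSadd hρm hρc herg k hρp (v+1) (NmasterF (v+2) k (d+1))
        (Mtw_measurable hσm hqm) (vpoly_Mtw hqm hσm hv) hM
    have hAB : ∀ᵐ t₀ ∂mU, ∀ h : G,
        (PhasePoly (skw S ρ) (ν.prod mU) (NsecF k (v+2) d)
          (fun x : Y × U => (fun z => q (skw S ρ h z) * (q z)⁻¹) (x.1, t₀)))
        ∧ (PhasePoly (skw S ρ) (ν.prod mU) (NsecF k (v+1) (NmasterF (v+2) k (d+1)))
          (fun x : Y × U => Mtw (fun y => ρ h (S (-h) y)) q (x.1, t₀))) :=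
      ae_all_iff.2 fun h => (hA h).and (hB h)
    filter_upwards [hAB] with t₀ ht₀
    simp only [NsecF]
    intro h
    obtain ⟨h1, h2⟩ := ht₀ h
    have hfun : (fun x : Y × U => (fun z : Y × U => q (z.1, t₀)) (skw S ρ h x)
          * ((fun z : Y × U => q (z.1, t₀)) x)⁻¹)
        = fun x : Y × U => (fun z : Y × U => q (skw S ρ h (z.1, t₀)) * (q (z.1, t₀))⁻¹) x
            * ((fun z : Y × U => Mtw (fun y => ρ h (S (-h) y)) q (z.1, t₀)) (skw S ρ h x))⁻¹ := by
      funext x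
      exact sect_id hS0 hSadd q h t₀ x
    rw [hfun]
    set N := max (NsecF k (v+2) d) (NsecF k (v+1) (NmasterF (v+2) k (d+1))) with hN
    have hp1 : PhasePoly (skw S ρ) (ν.prod mU) N
        (fun x : Y × U => (fun z : Y × U => q (skw S ρ h (z.1, t₀)) * (q (z.1, t₀))⁻¹) x) :=
      PhasePoly.mono (skw_qmp hS hρm) (le_max_left _ _) h1
    have hp2 : PhasePoly (skw S ρ) (ν.prod mU) N
        (fun x : Y × U => ((fun z : Y × U => Mtw (fun y => ρ h (S (-h) y)) q (z.1, t₀))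
          (skw S ρ h x))⁻¹) :=
      PhasePoly.inv (PhasePoly.mono (skw_qmp hS hρm) (le_max_right _ _)
        (phasePoly_comp_skw hS hSadd hρm hρc h2 h))
    exact hp1.mul hp2
termination_by (v, d)

end PolySec

/-! ### Main theorem -/

/-- Let `Y` be a `G`-system, `U` a compact metrizable abelian group with
Haar probability measure, `ρ : G × Y → U` a cocycle which is a phase polynomial of degree
`< k` (derivatives taken in `U`), and form the skew product `X = Y ×_ρ U` with action
`T_g (y, u) = (S_g y, ρ(g, y) · u)`, assumed ergodic.  If `f(g, x) = p(g, x) · Δ_g F (x)`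
with `p` a phase polynomial of degree `< m` and `F` measurable, and `f` is invariant under
all vertical rotations `V_u (y, t) = (y, u·t)`, then there are a constant `C = C(k, m)`, a
phase polynomial `p'` of degree `< C` and a measurable `F'`, both invariant under all
vertical rotations, with `f(g, x) = p'(g, x) · Δ_g F' (x)`. -/
theorem conze_lesigne_equation_descends_to_factor (k m : ℕ) :
    ∃ C : ℕ,
      ∀ (G : Type) [AddCommGroup G] [Countable G]
        (Y : Type) [MeasurableSpace Y] (ν : Measure Y) [IsProbabilityMeasure ν]
        (S : G → Y → Y),
        (∀ g, MeasurePreserving (S g) ν ν) → S 0 = id →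
        (∀ g g', S (g + g') = S g ∘ S g') →
      ∀ (U : Type) [CommGroup U] [TopologicalSpace U] [IsTopologicalGroup U]
        [CompactSpace U] [TopologicalSpace.MetrizableSpace U]
        [MeasurableSpace U] [BorelSpace U]
        (mU : Measure U) [mU.IsHaarMeasure] [IsProbabilityMeasure mU],
      ∀ (ρ : G → Y → U),
        (∀ g, Measurable (ρ g)) →
        (∀ g g', ∀ᵐ y ∂ν, ρ (g + g') y = ρ g y * ρ g' (S g y)) →
        (∀ g, PhasePoly S ν k (ρ g)) →
      ∀ (T : G → Y × U → Y × U),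
        (∀ g x, T g x = (S g x.1, ρ g x.1 * x.2)) →
        IsErgodicAction T (ν.prod mU) →
      ∀ (p : G → Y × U → Circle) (F : Y × U → Circle) (f : G → Y × U → Circle),
        (∀ g, Measurable (p g)) → Measurable F →
        (∀ g, PhasePoly T (ν.prod mU) m (p g)) →
        (∀ g x, f g x = p g x * (F (T g x) * (F x)⁻¹)) →
        (∀ (u : U) (g : G), ∀ᵐ x ∂ν.prod mU, f g (x.1, u * x.2) = f g x) →
      ∃ (p' : G → Y × U → Circle) (F' : Y × U → Circle),
        (∀ g, Measurable (p' g)) ∧ Measurable F' ∧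
        (∀ g, PhasePoly T (ν.prod mU) C (p' g)) ∧
        (∀ (u : U) (g : G), ∀ᵐ x ∂ν.prod mU, p' g (x.1, u * x.2) = p' g x) ∧
        (∀ u : U, ∀ᵐ x ∂ν.prod mU, F' (x.1, u * x.2) = F' x) ∧
        (∀ g, ∀ᵐ x ∂ν.prod mU, f g x = p' g x * (F' (T g x) * (F' x)⁻¹)) := by
  refine ⟨max (NsecF k m m) (NsecF k (max m 1) (NmasterG m (max m 1) k)), ?_⟩
  intro G _ _ Y _ ν _ S hS hS0 hSadd U _ _ _ _ _ _ _ mU _ _ ρ hρm hρc hρp T hT herg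
    p F f hpm hFm hppoly hfdef hfinv
  have hTeq : T = skw S ρ := by
    funext g x
    exact hT g x
  subst hTeq
  set Ns1 := NsecF k m m with hNs1
  set NR := NmasterG m (max m 1) k with hNR
  set Ns2 := NsecF k (max m 1) NR with hNs2
  -- measurability of f
  have hfm : ∀ g, Measurable (f g) := by
    intro g
    have : f g = fun x => p g x * (F (skw S ρ g x) * (F x)⁻¹) := by
      funext x; exact hfdef g x
    rw [this]
    exact (hpm g).mul ((hFm.comp (skw_measurable hS hρm g)).mul hFm.inv)
  -- goodness of F
  have hgood : ∀ g x, F (skw S ρ g x) * (F x)⁻¹ = f g x * (p g x)⁻¹ := by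
    intro g x
    rw [hfdef g x, mul_inv_cancel_comm]
  -- f is vertically invariant in the VPoly sense
  have hw : ∀ g, VPoly ν mU 1 (f g) := by
    intro g u
    show VPoly ν mU 0 (Dv u (f g))
    filter_upwards [hfinv u g] with x hx
    show f g (x.1, u * x.2) * (f g x)⁻¹ = 1
    rw [hx, mul_inv_cancel]
  have hqm' : ∀ g, Measurable (fun x => (p g x)⁻¹) := fun g => (hpm g).inv
  have hqpoly : ∀ g, PhasePoly (skw S ρ) (ν.prod mU) m (fun x => (p g x)⁻¹) :=
    fun g => (hppoly g).inv
  -- F has finite vertical degree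
  have hvF : VPoly ν mU (max m 1 + 1) F := by
    intro u
    exact poly_to_vpoly hS hρm herg (Dv_measurable hFm u)
      (dvF_poly hS hρm herg hqm' hgood hw hqpoly u)
  -- the twisted functions R_g
  have hσgm : ∀ g : G, Measurable (fun y => ρ g (S (-g) y)) :=
    fun g => (hρm g).comp (hS (-g)).measurable
  have hσgp : ∀ g : G, PhasePoly S ν k (fun y => ρ g (S (-g) y)) :=
    fun g => phasePoly_comp_S hS hSadd (hρp g) (-g)
  have hRg : ∀ g : G, PhasePoly (skw S ρ) (ν.prod mU) NR
      (Mtw (fun y => ρ g (S (-g) y)) F) :=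
    fun g => masterG hS hS0 hSadd hρm hρc herg m (max m 1) k hFm hfm hqm'
      (hσgm g) hgood hw hqpoly hvF (hσgp g)
  have hRv : ∀ g : G, VPoly ν mU (max m 1) (Mtw (fun y => ρ g (S (-g) y)) F) :=
    fun g => vpoly_Mtw hFm (hσgm g) hvF
  -- the vertical descent of f
  choose ft hftm hft using fun g => vinv_descend (hfm g) (fun u => hfinv u g)
  -- a.e. section conditions
  have hBig : ∀ᵐ t₀ ∂mU, ∀ g : G,
      (PhasePoly (skw S ρ) (ν.prod mU) Ns1 (fun x : Y × U => p g (x.1, t₀)))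
      ∧ (PhasePoly (skw S ρ) (ν.prod mU) Ns2
          (fun x : Y × U => Mtw (fun y => ρ g (S (-g) y)) F (x.1, t₀)))
      ∧ (∀ᵐ y ∂ν, f g (y, t₀) = ft g y) := by
    rw [ae_all_iff]
    intro g
    have hA := polysec hS hS0 hSadd hρm hρc herg k hρp m m (hpm g)
      (poly_to_vpoly hS hρm herg (hpm g) (hppoly g)) (hppoly g)
    have hB := polysec hS hS0 hSadd hρm hρc herg k hρp (max m 1) NR
      (Mtw_measurable (hσgm g) hFm) (hRv g) (hRg g)
    have hD := aeSect (hft g)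
    filter_upwards [hA, hB, hD] with t₀ h1 h2 h3
    exact ⟨h1, h2, h3⟩
  haveI : (MeasureTheory.ae mU).NeBot := IsProbabilityMeasure.ae_neBot
  obtain ⟨t₀, hgood'⟩ := hBig.exists
  -- the construction
  refine ⟨fun g x => f g x * ((fun z : Y × U => F (z.1, t₀)) (skw S ρ g x)
      * ((fun z : Y × U => F (z.1, t₀)) x)⁻¹)⁻¹,
    fun z : Y × U => F (z.1, t₀), ?_, ?_, ?_, ?_, ?_, ?_⟩
  · intro g
    exact (hfm g).mul (((hFm.comp (measurable_fst.prodMk measurable_const)).comp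
      (skw_measurable hS hρm g)).mul
      (hFm.comp (measurable_fst.prodMk measurable_const)).inv).inv
  · exact hFm.comp (measurable_fst.prodMk measurable_const)
  · -- the phase polynomial property of p'
    intro g
    obtain ⟨h1, h2, h3⟩ := hgood' g
    -- key pointwise identity
    have hkey : ∀ x : Y × U,
        f g x * ((fun z : Y × U => F (z.1, t₀)) (skw S ρ g x)
          * ((fun z : Y × U => F (z.1, t₀)) x)⁻¹)⁻¹
        = (f g x * (f g (x.1, t₀))⁻¹)
          * ((fun z : Y × U => p g (z.1, t₀)) x
              * (fun x : Y × U => Mtw (fun y => ρ g (S (-g) y)) F ((skw S ρ g x).1, t₀)) x) := by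
      intro x
      simp only [Mtw, skw]
      rw [Scancel hS0 hSadd g x.1]
      rw [hfdef g (x.1, t₀)]
      simp only [skw]
      simp [mul_comm, mul_assoc, mul_left_comm, mul_inv_rev, inv_mul_cancel_left,
        mul_inv_cancel_left, inv_inv]
    have hcongr : ∀ᵐ x ∂(ν.prod mU),
        ((fun z : Y × U => p g (z.1, t₀)) x
          * (fun x : Y × U => Mtw (fun y => ρ g (S (-g) y)) F ((skw S ρ g x).1, t₀)) x)
        = f g x * ((fun z : Y × U => F (z.1, t₀)) (skw S ρ g x)
          * ((fun z : Y × U => F (z.1, t₀)) x)⁻¹)⁻¹ := by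
      filter_upwards [hft g, aeY' h3] with x e1 e2
      rw [hkey x, e1, e2, mul_inv_cancel, one_mul]
    refine PhasePoly.congr (skw_qmp hS hρm) hcongr ?_
    have hp1 : PhasePoly (skw S ρ) (ν.prod mU) (max Ns1 Ns2)
        (fun x : Y × U => p g (x.1, t₀)) :=
      PhasePoly.mono (skw_qmp hS hρm) (le_max_left _ _) h1
    have hp2 : PhasePoly (skw S ρ) (ν.prod mU) (max Ns1 Ns2)
        (fun x : Y × U => Mtw (fun y => ρ g (S (-g) y)) F ((skw S ρ g x).1, t₀)) := by
      refine PhasePoly.mono (skw_qmp hS hρm) (le_max_right _ _) ?_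
      exact phasePoly_comp_skw hS hSadd hρm hρc h2 g
    exact hp1.mul hp2
  · -- vertical invariance of p'
    intro u g
    filter_upwards [hfinv u g] with x hx
    show f g (x.1, u * x.2) * (F ((skw S ρ g (x.1, u * x.2)).1, t₀)
        * (F ((x.1, u * x.2).1, t₀))⁻¹)⁻¹ = _
    have e1 : (skw S ρ g (x.1, u * x.2)).1 = (skw S ρ g x).1 := rfl
    have e2 : ((x.1, u * x.2) : Y × U).1 = x.1 := rfl
    rw [e1, e2, hx]
  · -- vertical invariance of F'
    intro u
    refine ae_of_all _ fun x => ?_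
    rfl
  · -- the equation
    intro g
    refine ae_of_all _ fun x => ?_
    simp [mul_comm, mul_assoc, mul_left_comm, mul_inv_rev, inv_mul_cancel_left,
      mul_inv_cancel_left, inv_inv]
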